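/- Let m ≥ 1, t ∈ ℝ, ξ ∈ 𝕊^{2m+1}, and let φ(z) = |cosh t + sinh t (z·ξ̄)|² on 𝕊^{2m+1}. Then for every z ∈ 𝕊^{2m+1}: T(Tφ)(z) = (1/2) φ(z)^{−1} [ (1 − φ(z)²)/4 + φ(z)^{−1}|∂φ|²(z) + φ(z)^{−2}|∂φ|⁴(z) + (Tφ(z))² ], where |∂φ|⁴ = (|∂φ|²)². -/

import Mathlib

noncomputable section

/-- The hermitian pairing `z·ξ̄ = Σ_j z_j conj(ξ_j)` on `ℂ^{m+1}`
(note Mathlib's `inner` is conjugate-linear in the first slot). -/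
def hprod {m : ℕ} (z ξ : EuclideanSpace ℂ (Fin (m+1))) : ℂ := inner ℂ ξ z

/-- The degree-zero homogeneous extension of a function on the unit sphere
`𝕊^{2m+1} ⊂ ℂ^{m+1}`: `F̃(y) = F(y/‖y‖)`. -/
def sphExtC {m : ℕ} (F : EuclideanSpace ℂ (Fin (m+1)) → ℝ)
    (y : EuclideanSpace ℂ (Fin (m+1))) : ℝ :=
  F (‖y‖⁻¹ • y)

/-- Second directional derivative of `F` at `x` in direction `v`. -/
def dir2 {V : Type*} [NormedAddCommGroup V] [NormedSpace ℝ V]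
    (F : V → ℝ) (x v : V) : ℝ :=
  fderiv ℝ (fun y => fderiv ℝ F y v) x v

/-- The Euclidean Laplacian on `ℂ^{m+1} ≅ ℝ^{2m+2}`, computed in the real orthonormal
basis `{e_j, i·e_j}`. -/
def lapC {m : ℕ} (F : EuclideanSpace ℂ (Fin (m+1)) → ℝ)
    (z : EuclideanSpace ℂ (Fin (m+1))) : ℝ :=
  ∑ j : Fin (m+1),
    (dir2 F z (EuclideanSpace.single j 1) + dir2 F z (EuclideanSpace.single j Complex.I))

/-- The Reeb derivative `TF(z) = d/ds|_{s=0} F(e^{is/2} z)` for the canonical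
pseudohermitian structure on `𝕊^{2m+1}`. -/
def reeb {m : ℕ} (F : EuclideanSpace ℂ (Fin (m+1)) → ℝ)
    (z : EuclideanSpace ℂ (Fin (m+1))) : ℝ :=
  deriv (fun s : ℝ => F (Complex.exp (Complex.I * s / 2) • z)) 0

/-- The CR sub-Laplacian of `(𝕊^{2m+1}, θ_c)`:
`Δ_b F(z) = (1/4) Δ_{ℝ^{2m+2}} F̃(z) − T(TF)(z)`. -/
def subLapC {m : ℕ} (F : EuclideanSpace ℂ (Fin (m+1)) → ℝ)
    (z : EuclideanSpace ℂ (Fin (m+1))) : ℝ :=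
  (1 / 4) * lapC (sphExtC F) z - reeb (reeb (sphExtC F)) z

/-- Orthogonal projection onto the holomorphic tangent (horizontal) space
`H_z = {w : Σ_j w_j conj(z_j) = 0}` at a point `z` of the unit sphere. -/
def projH {m : ℕ} (z w : EuclideanSpace ℂ (Fin (m+1))) : EuclideanSpace ℂ (Fin (m+1)) :=
  w - (inner ℂ z w : ℂ) • z

/-- `|∂F|²(z) = (1/8)|P_{H_z}(∇F̃(z))|²`, the squared norm of `∂_b F` with respect to the
canonical pseudohermitian structure `θ_c`. -/
def delbSq {m : ℕ} (F : EuclideanSpace ℂ (Fin (m+1)) → ℝ)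
    (z : EuclideanSpace ℂ (Fin (m+1))) : ℝ :=
  (1 / 8) * ‖projH z (gradient (sphExtC F) z)‖ ^ 2

/-! ### Auxiliary lemmas -/

open Complex InnerProductSpace

private lemma stmt15_rinner_eq {m : ℕ} (x y : EuclideanSpace ℂ (Fin (m+1))) :
    (inner ℝ x y) = (inner ℂ x y : ℂ).re := by
  simp [PiLp.inner_apply, Complex.inner, RCLike.inner_apply, Complex.re_sum]

private lemma stmt15_hderiv_cos : HasDerivAt (fun s : ℝ => Real.cos (s/2)) 0 0 := by
  simpa [Function.comp_def] using (Real.hasDerivAt_cos ((0:ℝ)/2)).comp 0 ((hasDerivAt_id (0:ℝ)).div_const 2)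

private lemma stmt15_hderiv_sin : HasDerivAt (fun s : ℝ => Real.sin (s/2)) (1/2) 0 := by
  simpa [Function.comp_def] using (Real.hasDerivAt_sin ((0:ℝ)/2)).comp 0 ((hasDerivAt_id (0:ℝ)).div_const 2)

private lemma stmt15_reeb_phi {m : ℕ} (a b : ℝ) (ξ z : EuclideanSpace ℂ (Fin (m+1))) :
    reeb (fun y => ‖(a:ℂ) + (b:ℂ) * inner ℂ ξ y‖ ^ 2) z
      = -(a*b) * (inner ℂ ξ z : ℂ).im := by
  set w : ℂ := inner ℂ ξ z with hw
  have hfun : (fun s : ℝ => ‖(a:ℂ) + (b:ℂ) * inner ℂ ξ (Complex.exp (Complex.I * s / 2) • z)‖ ^ 2)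
      = fun s : ℝ => a^2 + b^2 * normSq w + 2*a*b*(w.re * Real.cos (s/2) - w.im * Real.sin (s/2)) := by
    funext s
    have he : Complex.exp (Complex.I * s / 2) = Complex.exp ((s/2 : ℝ) * Complex.I) := by
      push_cast; ring_nf
    rw [inner_smul_right, Complex.sq_norm, he]
    simp only [Complex.normSq_apply, Complex.add_re, Complex.add_im, Complex.mul_re,
      Complex.mul_im, Complex.exp_ofReal_mul_I_re, Complex.exp_ofReal_mul_I_im,
      Complex.ofReal_re, Complex.ofReal_im]
    linear_combination (b^2*(w.re^2+w.im^2)) * (Real.sin_sq_add_cos_sq (s/2))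
  rw [reeb, hfun]
  have hd : HasDerivAt (fun s : ℝ => a^2 + b^2*normSq w + 2*a*b*(w.re * Real.cos (s/2) - w.im * Real.sin (s/2))) (-(a*b) * w.im) 0 := by
    have := (((stmt15_hderiv_cos.const_mul w.re).sub (stmt15_hderiv_sin.const_mul w.im)).const_mul (2*a*b)).const_add (a^2 + b^2*normSq w)
    exact this.congr_deriv (by ring)
  exact hd.deriv

private lemma stmt15_reeb_reeb_phi {m : ℕ} (a b : ℝ) (ξ z : EuclideanSpace ℂ (Fin (m+1))) :
    reeb (fun y => -(a*b) * (inner ℂ ξ y : ℂ).im) z = -(a*b) * (inner ℂ ξ z : ℂ).re / 2 := by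
  set w : ℂ := inner ℂ ξ z with hw
  have hfun : (fun s : ℝ => -(a*b) * (inner ℂ ξ (Complex.exp (Complex.I * s / 2) • z) : ℂ).im)
      = fun s : ℝ => -(a*b) * (Real.cos (s/2) * w.im + Real.sin (s/2) * w.re) := by
    funext s
    have he : Complex.exp (Complex.I * s / 2) = Complex.exp ((s/2 : ℝ) * Complex.I) := by
      push_cast; ring_nf
    rw [inner_smul_right, he]
    simp only [Complex.mul_im, Complex.exp_ofReal_mul_I_re, Complex.exp_ofReal_mul_I_im]
    rfl
  rw [reeb, hfun]
  have hd : HasDerivAt (fun s : ℝ => -(a*b) * (Real.cos (s/2) * w.im + Real.sin (s/2) * w.re)) (-(a*b) * w.re / 2) 0 := by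
    have := ((stmt15_hderiv_cos.mul_const w.im).add (stmt15_hderiv_sin.mul_const w.re)).const_mul (-(a*b))
    exact this.congr_deriv (by ring)
  exact hd.deriv

private lemma stmt15_norm_deriv {m : ℕ} (z : EuclideanSpace ℂ (Fin (m+1))) (hz : ‖z‖ = 1) :
    HasFDerivAt (fun y : EuclideanSpace ℂ (Fin (m+1)) => ‖y‖) (innerSL ℝ z) z := by
  have hz0 : z ≠ 0 := by intro h; rw [h] at hz; simp at hz
  have hN : DifferentiableAt ℝ (fun y : EuclideanSpace ℂ (Fin (m+1)) => ‖y‖) z :=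
    DifferentiableAt.norm ℂ differentiableAt_id hz0
  have hD := hN.hasFDerivAt
  have hd2 : HasFDerivAt (fun y : EuclideanSpace ℂ (Fin (m+1)) => ‖y‖ ^ 2) (2 • innerSL ℝ z) z :=
    (hasStrictFDerivAt_norm_sq z).hasFDerivAt
  have hd2' : HasFDerivAt (fun y : EuclideanSpace ℂ (Fin (m+1)) => ‖y‖ ^ 2)
      ((2 : ℝ) • fderiv ℝ (fun y : EuclideanSpace ℂ (Fin (m+1)) => ‖y‖) z) z := by
    have h := hD.mul hD
    have he : (fun y : EuclideanSpace ℂ (Fin (m+1)) => ‖y‖ ^ 2) = fun y => ‖y‖ * ‖y‖ := by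
      funext y; ring
    rw [he]
    refine h.congr_fderiv ?_
    rw [hz]
    module
  have hDeq : fderiv ℝ (fun y : EuclideanSpace ℂ (Fin (m+1)) => ‖y‖) z = innerSL ℝ z := by
    have h := hd2.unique hd2'
    ext x
    have := DFunLike.congr_fun h x
    simp only [ContinuousLinearMap.smul_apply, smul_eq_mul, nsmul_eq_mul, Nat.cast_ofNat] at this
    linarith
  exact hDeq ▸ hD

private lemma stmt15_grad {m : ℕ} (a b : ℝ) (ξ z : EuclideanSpace ℂ (Fin (m+1))) (hz : ‖z‖ = 1) :
    HasGradientAt (fun y : EuclideanSpace ℂ (Fin (m+1)) =>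
        ‖(a:ℂ) + (b:ℂ) * (((‖y‖⁻¹ : ℝ) : ℂ) * (inner ℂ ξ y : ℂ))‖ ^ 2)
      ((2*(b:ℂ)*((a:ℂ)+(b:ℂ)*(inner ℂ ξ z : ℂ))) • ξ
        - (((2*b*((starRingEnd ℂ ((a:ℂ)+(b:ℂ)*(inner ℂ ξ z : ℂ))) * (inner ℂ ξ z : ℂ)).re : ℝ)) : ℂ) • z) z := by
  have hz1 : ((fun y : EuclideanSpace ℂ (Fin (m+1)) => ‖y‖) z) ≠ 0 := by simp [hz]
  have hinv : HasFDerivAt (fun y : EuclideanSpace ℂ (Fin (m+1)) => ‖y‖⁻¹)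
      ((-ContinuousLinearMap.mulLeftRight ℝ ℝ (‖z‖)⁻¹ (‖z‖)⁻¹).comp (innerSL ℝ z)) z :=
    (hasFDerivAt_inv' hz1).comp z (stmt15_norm_deriv z hz)
  have hOC : HasFDerivAt (fun y : EuclideanSpace ℂ (Fin (m+1)) => ((‖y‖⁻¹ : ℝ) : ℂ))
      (Complex.ofRealCLM.comp ((-ContinuousLinearMap.mulLeftRight ℝ ℝ (‖z‖)⁻¹ (‖z‖)⁻¹).comp (innerSL ℝ z))) z :=
    Complex.ofRealCLM.hasFDerivAt.comp z hinv
  have hW : HasFDerivAt (fun y : EuclideanSpace ℂ (Fin (m+1)) => (inner ℂ ξ y : ℂ))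
      ((innerSL ℂ ξ).restrictScalars ℝ) z :=
    ((innerSL ℂ ξ).restrictScalars ℝ).hasFDerivAt
  have hM := hOC.mul hW
  have hC := (hM.const_mul (b:ℂ)).const_add (a:ℂ)
  have hNS := hC.norm_sq
  apply hasGradientAt_iff_hasFDerivAt.mpr
  refine hNS.congr_fderiv ?_
  symm
  refine ContinuousLinearMap.ext fun h => ?_
  rw [toDual_apply_apply]
  simp only [ContinuousLinearMap.smul_apply, ContinuousLinearMap.comp_apply, innerSL_apply_apply,
    ContinuousLinearMap.coe_smul', Pi.smul_apply, ContinuousLinearMap.add_apply,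
    ContinuousLinearMap.coe_restrictScalars', Complex.ofRealCLM_apply,
    ContinuousLinearMap.neg_apply, ContinuousLinearMap.mulLeftRight_apply,
    Complex.inner, Pi.mul_apply, hz, inv_one, Complex.ofReal_one, one_mul, one_smul, smul_eq_mul, nsmul_eq_mul]
  rw [stmt15_rinner_eq]
  rw [inner_sub_left, inner_smul_left, inner_smul_left]
  rw [stmt15_rinner_eq z h]
  simp only [map_mul, Complex.conj_conj, Complex.conj_ofReal, map_ofNat,
    Complex.sub_re, Complex.mul_re, Complex.mul_im, Complex.ofReal_re, Complex.ofReal_im,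
    Complex.add_re, Complex.add_im, Complex.ofReal_neg, Complex.neg_re, Complex.neg_im,
    Complex.I_re, Complex.I_im, Complex.re_ofNat, Complex.im_ofNat]
  ring

private lemma stmt15_key0 (a b u v nc : ℝ) (h1 : a^2 - b^2 = 1)
    (hnc : nc = (a + b*u)^2 + (b*v)^2) :
    (1 - nc^2)/4 + b^2*(1-(u^2+v^2))/2 + (b^2*(1-(u^2+v^2))/2)^2 + (a*b*v)^2
      = -(a*b)*u*nc := by
  linear_combination ((-1/4)*nc + (-1/4)*b^2*v^2 + (-1/4)*b^2*u^2 + (1/2)*a*b*u + (-1/4)*a^2) * hnc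
    + ((-1/4) + (-1/4)*b^2 + (1/2)*b^2*v^2 + (1/2)*b^2*u^2 + (-1/4)*a^2) * h1

private lemma stmt15_key (a b u v nc : ℝ) (h1 : a^2 - b^2 = 1)
    (hnc : nc = (a + b*u)^2 + (b*v)^2) (hpos : 0 < nc) :
    -(a*b) * u / 2 = 1/2 * nc⁻¹ *
      ((1 - nc^2)/4 + nc⁻¹ * (b^2*nc*(1-(u^2+v^2))/2)
        + (nc⁻¹)^2 * (b^2*nc*(1-(u^2+v^2))/2)^2 + (-(a*b)*v)^2) := by
  have h0 : nc ≠ 0 := ne_of_gt hpos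
  have e1 : nc⁻¹ * (b^2*nc*(1-(u^2+v^2))/2) = b^2*(1-(u^2+v^2))/2 := by
    field_simp
  have e2 : (nc⁻¹)^2 * (b^2*nc*(1-(u^2+v^2))/2)^2 = (b^2*(1-(u^2+v^2))/2)^2 := by
    field_simp
  rw [e1, e2, show (-(a*b)*v)^2 = (a*b*v)^2 by ring,
    stmt15_key0 a b u v nc h1 hnc]
  field_simp

theorem stmt15 (m : ℕ) (hm : 1 ≤ m) (t : ℝ)
    (ξ : EuclideanSpace ℂ (Fin (m+1))) (hξ : ‖ξ‖ = 1)
    (φ : EuclideanSpace ℂ (Fin (m+1)) → ℝ)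
    (hφ : ∀ z, φ z = ‖(Real.cosh t : ℂ) + (Real.sinh t : ℂ) * hprod z ξ‖ ^ 2) :
    ∀ z : EuclideanSpace ℂ (Fin (m+1)), ‖z‖ = 1 →
      reeb (reeb φ) z
        = (1 / 2) * (φ z)⁻¹ *
            ((1 - (φ z) ^ 2) / 4 + (φ z)⁻¹ * delbSq φ z
              + ((φ z)⁻¹) ^ 2 * (delbSq φ z) ^ 2 + (reeb φ z) ^ 2) := by
  intro z hz
  set a : ℝ := Real.cosh t with ha
  set b : ℝ := Real.sinh t with hb
  set w : ℂ := inner ℂ ξ z with hw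
  have h1 : a^2 - b^2 = 1 := Real.cosh_sq_sub_sinh_sq t
  have hφ' : φ = fun y => ‖(a:ℂ) + (b:ℂ) * inner ℂ ξ y‖ ^ 2 := by
    funext y; exact hφ y
  -- value of φ at z
  have hφz : φ z = normSq ((a:ℂ) + (b:ℂ) * w) := by
    rw [hφ z]; rw [Complex.sq_norm]; rfl
  have hnc : normSq ((a:ℂ) + (b:ℂ) * w) = (a + b*w.re)^2 + (b*w.im)^2 := by
    simp [Complex.normSq_apply, Complex.add_re, Complex.add_im, Complex.mul_re, Complex.mul_im,
      Complex.ofReal_re, Complex.ofReal_im]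
    ring
  -- positivity
  have habsw : ‖w‖ ≤ 1 := by
    have h := norm_inner_le_norm (𝕜 := ℂ) ξ z
    rw [hξ, hz] at h
    simpa using h
  have hab : |b| < a := by
    have hc := Real.cosh_pos t
    nlinarith [_root_.sq_abs b, h1]
  have hc0 : ((a:ℂ) + (b:ℂ) * w) ≠ 0 := by
    intro h
    have h2 : (a:ℂ) = -((b:ℂ)*w) := by linear_combination h
    have h3 := congrArg norm h2
    simp only [Complex.norm_real, Real.norm_eq_abs, norm_neg, norm_mul] at h3
    have h5 : |a| ≤ |b| := by
      rw [h3]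
      exact mul_le_of_le_one_right (abs_nonneg b) habsw
    linarith [hab, le_abs_self a]
  have hpos : 0 < normSq ((a:ℂ) + (b:ℂ) * w) := Complex.normSq_pos.mpr hc0
  -- reeb computations
  have hreeb1 : reeb φ z = -(a*b) * w.im := by
    rw [hφ']; exact stmt15_reeb_phi a b ξ z
  have hreebfun : reeb φ = fun y => -(a*b) * (inner ℂ ξ y : ℂ).im := by
    funext y; rw [hφ']; exact stmt15_reeb_phi a b ξ y
  have hreeb2 : reeb (reeb φ) z = -(a*b) * w.re / 2 := by
    rw [hreebfun]; exact stmt15_reeb_reeb_phi a b ξ z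
  -- sphExtC rewriting
  have hext : sphExtC φ = fun y : EuclideanSpace ℂ (Fin (m+1)) =>
      ‖(a:ℂ) + (b:ℂ) * (((‖y‖⁻¹ : ℝ) : ℂ) * (inner ℂ ξ y : ℂ))‖ ^ 2 := by
    funext y
    rw [sphExtC, hφ']
    show ‖(a:ℂ) + (b:ℂ) * inner ℂ ξ (‖y‖⁻¹ • y)‖ ^ 2 = _
    have hsr : (inner ℂ ξ (‖y‖⁻¹ • y) : ℂ) = ((‖y‖⁻¹ : ℝ) : ℂ) * (inner ℂ ξ y : ℂ) := by
      rw [← algebraMap_smul ℂ (‖y‖⁻¹ : ℝ) y, inner_smul_right]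
      norm_num [Complex.coe_algebraMap]
    rw [hsr]
  -- gradient
  have hgrad : gradient (sphExtC φ) z
      = (2*(b:ℂ)*((a:ℂ)+(b:ℂ)*w)) • ξ
        - (((2*b*((starRingEnd ℂ ((a:ℂ)+(b:ℂ)*w)) * w).re : ℝ)) : ℂ) • z := by
    rw [hext]
    exact (stmt15_grad a b ξ z hz).gradient
  -- projection
  have hinnerzz : (inner ℂ z z : ℂ) = 1 := by
    rw [inner_self_eq_norm_sq_to_K, hz]; norm_num
  have hinnerzξ : (inner ℂ z ξ : ℂ) = starRingEnd ℂ w := by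
    rw [hw, ← inner_conj_symm]
  have hproj : projH z (gradient (sphExtC φ) z)
      = (2*(b:ℂ)*((a:ℂ)+(b:ℂ)*w)) • (ξ - (starRingEnd ℂ w) • z) := by
    rw [hgrad, projH, inner_sub_right, inner_smul_right, inner_smul_right, hinnerzz, hinnerzξ]
    module
  have hinscw : (inner ℂ ξ ((starRingEnd ℂ w) • z) : ℂ) = ((normSq w : ℝ) : ℂ) := by
    rw [inner_smul_right, ← hw, ← Complex.normSq_eq_conj_mul_self]
  have hnormp : ‖ξ - (starRingEnd ℂ w) • z‖ ^ 2 = 1 - normSq w := by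
    rw [@norm_sub_sq ℂ, hinscw, norm_smul, hξ, hz]
    simp only [RCLike.re_to_complex, Complex.ofReal_re,
      Complex.norm_conj, Complex.sq_norm, mul_one, one_pow]
    ring
  have hdelb : delbSq φ z = b^2 * normSq ((a:ℂ) + (b:ℂ)*w) * (1 - normSq w) / 2 := by
    rw [delbSq, hproj, norm_smul, mul_pow, hnormp]
    simp [map_mul, Complex.sq_norm, Complex.normSq_mul,
      Complex.normSq_ofReal]
    rw [mul_pow, mul_pow, _root_.sq_abs, Complex.sq_norm]
    ring
  -- final assembly
  rw [hreeb2, hreeb1, hφz, hdelb]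
  have hnw : normSq w = w.re^2 + w.im^2 := by
    rw [Complex.normSq_apply]; ring
  rw [hnw]
  exact stmt15_key a b w.re w.im _ h1 hnc hpos
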